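/- Let ε > 0, u_l, u_r ∈ ℝ with u_l ≠ u_r, and v_l, v_r > 0 with v_l ≠ v_r. If the Rankine–Hugoniot relations -σ(u_l - u_r) + (u_l² + ε v_l - u_r² - ε v_r) = 0 and -σ(v_l - v_r) + (v_l u_l - v_r u_r) = 0 hold for some σ ∈ ℝ, then the ratio s = (v_l - v_r)/(u_l - u_r) satisfies the quadratic equation ε s² + (u_l + u_r) s - (u_l v_l - u_r v_r)/(u_l - u_r) = 0, and hence s = (-u_l ± √(u_l² + 4ε v_l))/(2ε). -/

import Mathlib

theorem RH_ratio_quadratic (ε σ ul ur vl vr : ℝ) (hε : 0 < ε)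
    (hu : ul ≠ ur) (hvl : 0 < vl) (hvr : 0 < vr) (hv : vl ≠ vr)
    (h1 : -σ * (ul - ur) + (ul ^ 2 + ε * vl - ur ^ 2 - ε * vr) = 0)
    (h2 : -σ * (vl - vr) + (vl * ul - vr * ur) = 0) :
    let s := (vl - vr) / (ul - ur)
    ε * s ^ 2 + (ul + ur) * s - (ul * vl - ur * vr) / (ul - ur) = 0 ∧
      (s = (-ul + Real.sqrt (ul ^ 2 + 4 * ε * vl)) / (2 * ε) ∨
        s = (-ul - Real.sqrt (ul ^ 2 + 4 * ε * vl)) / (2 * ε)) := by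
  intro s
  have hd : ul - ur ≠ 0 := sub_ne_zero.mpr hu
  have key : ε * (vl - vr) ^ 2 + ul * (vl - vr) * (ul - ur) - vl * (ul - ur) ^ 2 = 0 := by
    linear_combination (vl - vr) * h1 - (ul - ur) * h2
  have hq : ε * s ^ 2 + ul * s - vl = 0 := by
    show ε * ((vl - vr) / (ul - ur)) ^ 2 + ul * ((vl - vr) / (ul - ur)) - vl = 0
    field_simp
    linear_combination key
  constructor
  · have hC : (ul * vl - ur * vr) / (ul - ur) = vl + ur * s := by
      show _ = vl + ur * ((vl - vr) / (ul - ur))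
      field_simp
      ring
    rw [hC]
    linear_combination hq
  · have hsq : (2 * ε * s + ul) ^ 2 = ul ^ 2 + 4 * ε * vl := by nlinarith [hq]
    have hroot : Real.sqrt (ul ^ 2 + 4 * ε * vl) = |2 * ε * s + ul| := by
      rw [← hsq, Real.sqrt_sq_eq_abs]
    have hε' : (2 : ℝ) * ε ≠ 0 := by positivity
    rcases abs_cases (2 * ε * s + ul) with ⟨h, _⟩ | ⟨h, _⟩
    · left
      rw [hroot, h]
      field_simp
      ring
    · right
      rw [hroot, h]
      field_simp
      ring
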